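/- arXiv:2605.05046 — 2 statements merged into one kernel-verified Lean document; each statement's English description precedes it below -/
import Mathlib

section
/- (Path coupling lemma.) Consider a Markov chain on a finite state space Ω ⊆ S^N for a finite color set S and coordinate set N. Say σ ∼ ξ if σ and ξ differ in exactly one coordinate. Let D be a positive integer and let Φ : Ω × Ω → {0,1,…,D} be such that Φ(σ,ξ) ≥ 1 whenever σ ≠ ξ, and such that for all σ,ξ ∈ Ω, Φ(σ,ξ) equals the minimum, over all simple paths η = (η₀,…,η_ℓ) in Ω with η₀ = σ, η_ℓ = ξ and η_i ∼ η_{i+1} for all i, of Σ_{i=0}^{ℓ−1} Φ(η_i,η_{i+1}). Suppose the graph (Ω, ∼) is connected, and suppose there exists β < 1 and, for every pair of states X ∼ Y, a coupling of the one-step transition distributions from X and from Y under which E[Φ(X′,Y′)] ≤ β·Φ(X,Y). Then there is an absolute constant c such that T_mix(ε) ≤ c · log(D/ε)/(1−β) for every ε ∈ (0,1). -/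
open Classical

noncomputable section

/-- The vertex set of the graph `Ĝ`: the edges of `G₁ ∪ G₂`. -/
abbrev HatVertex {V : Type} (G₁ G₂ : SimpleGraph V) : Type :=
  {e : Sym2 V // e ∈ G₁.edgeSet ∪ G₂.edgeSet}

/-- The graph `Ĝ`: the union of the line graphs of `G₁` and `G₂`, identifying vertices
corresponding to edges appearing in both graphs.  Two distinct edges are adjacent iff they
share an endpoint and both lie in `E₁` or both lie in `E₂`. -/
def hatG {V : Type} (G₁ G₂ : SimpleGraph V) : SimpleGraph (HatVertex G₁ G₂) where
  Adj e f := e ≠ f ∧ (∃ x : V, x ∈ e.1 ∧ x ∈ f.1) ∧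
    ((e.1 ∈ G₁.edgeSet ∧ f.1 ∈ G₁.edgeSet) ∨ (e.1 ∈ G₂.edgeSet ∧ f.1 ∈ G₂.edgeSet))
  symm := by
    constructor
    rintro e f ⟨h1, ⟨x, hx1, hx2⟩, h3⟩
    exact ⟨h1.symm, ⟨x, hx2, hx1⟩, by tauto⟩
  loopless := by
    constructor
    rintro e ⟨h1, -, -⟩
    exact h1 rfl

instance {V : Type} [Fintype V] (G₁ G₂ : SimpleGraph V) : Fintype (HatVertex G₁ G₂) :=
  Fintype.ofFinite _

/-- The weight of a vertex of `Ĝ`: `2` if the corresponding edge lies in both graphs,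
`1` otherwise. -/
def hatWeight {V : Type} (G₁ G₂ : SimpleGraph V) (e : HatVertex G₁ G₂) : ℕ :=
  if e.1 ∈ G₁.edgeSet ∧ e.1 ∈ G₂.edgeSet then 2 else 1

/-- A proper vertex coloring of a graph. -/
def IsProperVertexColoring {α β : Type} (H : SimpleGraph α) (σ : α → β) : Prop :=
  ∀ u w, H.Adj u w → σ u ≠ σ w

/-- A simultaneous edge `k`-coloring of the pair `(G₁, G₂)`. -/
def IsSimultaneousEdgeColoring {V : Type} (G₁ G₂ : SimpleGraph V) {k : ℕ}
    (φ : HatVertex G₁ G₂ → Fin k) : Prop :=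
  (∀ e f : HatVertex G₁ G₂, e.1 ∈ G₁.edgeSet → f.1 ∈ G₁.edgeSet → e ≠ f →
      (∃ x : V, x ∈ e.1 ∧ x ∈ f.1) → φ e ≠ φ f) ∧
  (∀ e f : HatVertex G₁ G₂, e.1 ∈ G₂.edgeSet → f.1 ∈ G₂.edgeSet → e ≠ f →
      (∃ x : V, x ∈ e.1 ∧ x ∈ f.1) → φ e ≠ φ f)

/-- The weighted Hamming distance `Ĥ`. -/
def hatH {V : Type} [Fintype V] (G₁ G₂ : SimpleGraph V) {k : ℕ}
    (σ τ : HatVertex G₁ G₂ → Fin k) : ℝ :=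
  ∑ v : HatVertex G₁ G₂, if σ v ≠ τ v then (hatWeight G₁ G₂ v : ℝ) else 0

/-- One step of a Markov chain applied to a distribution. -/
def stepDist {Ω : Type} [Fintype Ω] (P : Ω → Ω → ℝ) (μ : Ω → ℝ) : Ω → ℝ :=
  fun τ => ∑ σ, μ σ * P σ τ

/-- Total variation distance between two distributions on a finite state space. -/
def tvDist {Ω : Type} [Fintype Ω] (μ ν : Ω → ℝ) : ℝ :=
  (∑ x, |μ x - ν x|) / 2

/-- The point mass at a state. -/
def deltaDist {Ω : Type} (x : Ω) : Ω → ℝ :=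
  fun y => if y = x then 1 else 0

/-- A coupling of two distributions on a finite set. -/
def IsCoupling {Ω : Type} [Fintype Ω] (γ : Ω × Ω → ℝ) (μ ν : Ω → ℝ) : Prop :=
  (∀ q, 0 ≤ γ q) ∧ (∀ a, ∑ b, γ (a, b) = μ a) ∧ (∀ b, ∑ a, γ (a, b) = ν b)

/-- The result of a Glauber update at `(v, c)`: recolor `v` with `c` provided no
`Ĝ`-neighbor of `v` has color `c`. -/
def glauberStep {V : Type} (G₁ G₂ : SimpleGraph V) {k : ℕ}
    (σ : HatVertex G₁ G₂ → Fin k) (v : HatVertex G₁ G₂) (c : Fin k) :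
    HatVertex G₁ G₂ → Fin k :=
  if ∀ w, (hatG G₁ G₂).Adj v w → σ w ≠ c then Function.update σ v c else σ

/-- The transition matrix of the Glauber dynamics on `{1,…,k}^{V̂}`. -/
def glauberP {V : Type} [Fintype V] (G₁ G₂ : SimpleGraph V) (k : ℕ)
    (σ τ : HatVertex G₁ G₂ → Fin k) : ℝ :=
  (∑ v : HatVertex G₁ G₂, ∑ c : Fin k,
      if glauberStep G₁ G₂ σ v c = τ then (1 : ℝ) else 0) /
    ((Fintype.card (HatVertex G₁ G₂) : ℝ) * (k : ℝ))

/-- The uniform distribution over the proper vertex `k`-colorings of `Ĝ`,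
viewed as a distribution on all of `{1,…,k}^{V̂}`. -/
def uniformProper {V : Type} [Fintype V] (G₁ G₂ : SimpleGraph V) (k : ℕ) :
    (HatVertex G₁ G₂ → Fin k) → ℝ :=
  fun σ => if IsProperVertexColoring (hatG G₁ G₂) σ then
      (1 : ℝ) / (Nat.card {τ : HatVertex G₁ G₂ → Fin k //
        IsProperVertexColoring (hatG G₁ G₂) τ} : ℝ)
    else 0

/-- The graph of `(σ(v), c)`-alternating steps. -/
def clusterGraph {α β : Type} (H : SimpleGraph α) (σ : α → β) (v : α) (c : β) :
    SimpleGraph α where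
  Adj w w' := H.Adj w w' ∧ ((σ w = σ v ∧ σ w' = c) ∨ (σ w = c ∧ σ w' = σ v))
  symm := by
    constructor
    rintro w w' ⟨h1, h2⟩
    exact ⟨h1.symm, by tauto⟩
  loopless := by
    constructor
    rintro w ⟨h1, -⟩
    exact H.loopless.irrefl w h1

/-- The cluster `S_σ(v,c)`: the set of vertices reachable from `v` by a
`(σ(v), c)`-alternating path, with `S_σ(v, σ(v)) = {v}`. -/
def cluster {α β : Type} (H : SimpleGraph α) (σ : α → β) (v : α) (c : β) : Set α :=
  if c = σ v then {v} else {w | (clusterGraph H σ v c).Reachable v w}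

/-- The coloring obtained by interchanging the colors `σ(v)` and `c` on the cluster
`S_σ(v,c)`. -/
def flipColoring {α β : Type} (H : SimpleGraph α) (σ : α → β) (v : α) (c : β) : α → β :=
  fun w => if w ∈ cluster H σ v c then
      if σ w = σ v then c else if σ w = c then σ v else σ w
    else σ w

/-- The transition matrix of the flip dynamics with flip parameters `p`. -/
def flipP {α : Type} [Fintype α] (H : SimpleGraph α) (k : ℕ) (p : ℕ → ℝ)
    (σ τ : α → Fin k) : ℝ :=
  (∑ v : α, ∑ c : Fin k,
      ((p (Nat.card (cluster H σ v c)) / (Nat.card (cluster H σ v c) : ℝ)) *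
          (if flipColoring H σ v c = τ then (1 : ℝ) else 0) +
        (1 - p (Nat.card (cluster H σ v c)) / (Nat.card (cluster H σ v c) : ℝ)) *
          (if σ = τ then (1 : ℝ) else 0))) /
    ((Fintype.card α : ℝ) * (k : ℝ))

/-- The explicit flip parameters `P₁ = 1, P₂ = 137/650, P₃ = 77/650, P₄ = 47/650,
P₅ = 27/650, P₆ = 12/650`, and `P_i = 0` for `i ≥ 7`. -/
def flipParams : ℕ → ℝ := fun i =>
  if i = 1 then 1
  else if i = 2 then 137 / 650
  else if i = 3 then 77 / 650
  else if i = 4 then 47 / 650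
  else if i = 5 then 27 / 650
  else if i = 6 then 12 / 650
  else 0

/-- The set of (not necessarily proper) `L`-colorings. -/
def ListColorings {α : Type} (L : α → Finset ℕ) : Type :=
  {f : α → ℕ // ∀ v, f v ∈ L v}

instance {α : Type} [Finite α] (L : α → Finset ℕ) : Finite (ListColorings L) :=
  Finite.of_injective
    (fun f => (fun v => (⟨f.1 v, f.2 v⟩ : {c : ℕ // c ∈ L v})))
    (by
      intro f g h
      apply Subtype.ext
      funext v
      exact congrArg Subtype.val (congrFun h v))

instance {α : Type} [Fintype α] (L : α → Finset ℕ) : Fintype (ListColorings L) :=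
  Fintype.ofFinite _

/-- The `i`-th smallest element of a finite set of natural numbers (0-indexed). -/
def nthColor (L : Finset ℕ) (i : ℕ) : ℕ :=
  (L.sort (· ≤ ·)).getD i 0

/-- A cluster is flippable if both of its colors belong to the list of every vertex in it. -/
def ListFlippable {α : Type} (H : SimpleGraph α) (L : α → Finset ℕ) (σ : α → ℕ)
    (v : α) (c : ℕ) : Prop :=
  ∀ w ∈ cluster H σ v c, σ v ∈ L w ∧ c ∈ L w

/-- The transition matrix of the flip dynamics for `L`-list colorings. -/
def listFlipP {α : Type} [Fintype α] (H : SimpleGraph α) (L : α → Finset ℕ) (k : ℕ)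
    (p : ℕ → ℝ) (σ τ : ListColorings L) : ℝ :=
  (∑ v : α, ∑ i : Fin k,
      ((if ListFlippable H L σ.1 v (nthColor (L v) i) then
          p (Nat.card (cluster H σ.1 v (nthColor (L v) i))) /
            (Nat.card (cluster H σ.1 v (nthColor (L v) i)) : ℝ)
        else 0) *
          (if flipColoring H σ.1 v (nthColor (L v) i) = τ.1 then (1 : ℝ) else 0) +
        (1 - (if ListFlippable H L σ.1 v (nthColor (L v) i) then
          p (Nat.card (cluster H σ.1 v (nthColor (L v) i))) /
            (Nat.card (cluster H σ.1 v (nthColor (L v) i)) : ℝ)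
        else 0)) *
          (if σ = τ then (1 : ℝ) else 0))) /
    ((Fintype.card α : ℝ) * (k : ℝ))

/-- The uniform distribution over the proper `L`-colorings. -/
def uniformProperList {α : Type} [Fintype α] (H : SimpleGraph α) (L : α → Finset ℕ) :
    ListColorings L → ℝ :=
  fun σ => if IsProperVertexColoring H σ.1 then
      (1 : ℝ) / (Nat.card {τ : ListColorings L // IsProperVertexColoring H τ.1} : ℝ)
    else 0

/-- Two states differ in exactly one coordinate. -/
def AdjOne {N S : Type} (σ ξ : N → S) : Prop :=
  ∃ i, σ i ≠ ξ i ∧ ∀ j, j ≠ i → σ j = ξ j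

/-- The set of total `Φ`-lengths of simple paths from `σ` to `ξ` inside `Ω` whose
consecutive states differ in exactly one coordinate. -/
def PathSums {N S : Type} (Ω : Finset (N → S)) (Φ : (N → S) → (N → S) → ℕ)
    (σ ξ : N → S) : Set ℕ :=
  {s | ∃ (ℓ : ℕ) (η : Fin (ℓ + 1) → (N → S)),
    (∀ i, η i ∈ Ω) ∧ Function.Injective η ∧
    η 0 = σ ∧ η (Fin.last ℓ) = ξ ∧
    (∀ i : Fin ℓ, AdjOne (η i.castSucc) (η i.succ)) ∧
    s = ∑ i : Fin ℓ, Φ (η i.castSucc) (η i.succ)}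

/-- A single move of the Glauber dynamics: recolor one vertex with a color not
appearing in its `Ĝ`-neighborhood. -/
def GlauberMove {V : Type} (G₁ G₂ : SimpleGraph V) {k : ℕ}
    (σ τ : HatVertex G₁ G₂ → Fin k) : Prop :=
  ∃ (v : HatVertex G₁ G₂) (c : Fin k),
    (∀ w, (hatG G₁ G₂).Adj v w → σ w ≠ c) ∧ τ = Function.update σ v c

end

lemma pc_coupling_le_left {X : Type} [Fintype X] {Γ : X × X → ℝ} {μ ν : X → ℝ}
    (h : IsCoupling Γ μ ν) (a b : X) : Γ (a, b) ≤ μ a := by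
  rw [← h.2.1 a]
  exact Finset.single_le_sum (fun c _ => h.1 (a, c)) (Finset.mem_univ b)

lemma pc_coupling_le_right {X : Type} [Fintype X] {Γ : X × X → ℝ} {μ ν : X → ℝ}
    (h : IsCoupling Γ μ ν) (a b : X) : Γ (a, b) ≤ ν b := by
  rw [← h.2.2 b]
  exact Finset.single_le_sum (fun c _ => h.1 (c, b)) (Finset.mem_univ a)

lemma pc_glue {X : Type} [Fintype X] {μ κ ν : X → ℝ} {d : X → X → ℝ}
    {Γ₁ Γ₂ : X × X → ℝ} (h1 : IsCoupling Γ₁ μ κ) (h2 : IsCoupling Γ₂ κ ν)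
    (htri : ∀ a b c, 0 < Γ₁ (a, b) → 0 < Γ₂ (b, c) → d a c ≤ d a b + d b c) :
    ∃ Γ : X × X → ℝ, IsCoupling Γ μ ν ∧
      ∑ q : X × X, Γ q * d q.1 q.2 ≤
        ∑ q : X × X, Γ₁ q * d q.1 q.2 + ∑ q : X × X, Γ₂ q * d q.1 q.2 := by
  have hκ0 : ∀ b, 0 ≤ κ b := fun b => by
    rw [← h2.2.1 b]; exact Finset.sum_nonneg fun c _ => h2.1 (b, c)
  set w : X → X → X → ℝ := fun a b c => if κ b = 0 then 0 else Γ₁ (a, b) * Γ₂ (b, c) / κ b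
    with hw
  have hw0 : ∀ a b c, 0 ≤ w a b c := by
    intro a b c
    simp only [hw]
    split
    · exact le_refl 0
    · exact div_nonneg (mul_nonneg (h1.1 _) (h2.1 _)) (hκ0 b)
  have hΓ1z : ∀ a b, κ b = 0 → Γ₁ (a, b) = 0 := by
    intro a b hb
    have h' := pc_coupling_le_right h1 a b
    rw [hb] at h'
    linarith [h1.1 (a, b)]
  have hΓ2z : ∀ b c, κ b = 0 → Γ₂ (b, c) = 0 := by
    intro b c hb
    have h' := pc_coupling_le_left h2 b c
    rw [hb] at h'
    linarith [h2.1 (b, c)]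
  have hsumc : ∀ a b, ∑ c, w a b c = Γ₁ (a, b) := by
    intro a b
    by_cases hb : κ b = 0
    · simp [hw, hb, hΓ1z a b hb]
    · simp only [hw, if_neg hb]
      rw [← Finset.sum_div, ← Finset.mul_sum,
        show (∑ c, Γ₂ (b, c)) = κ b from h2.2.1 b]
      field_simp
  have hsuma : ∀ b c, ∑ a, w a b c = Γ₂ (b, c) := by
    intro b c
    by_cases hb : κ b = 0
    · simp [hw, hb, hΓ2z b c hb]
    · simp only [hw, if_neg hb]
      rw [← Finset.sum_div, ← Finset.sum_mul,
        show (∑ a, Γ₁ (a, b)) = κ b from h1.2.2 b]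
      field_simp
  refine ⟨fun q => ∑ b, w q.1 b q.2, ⟨?_, ?_, ?_⟩, ?_⟩
  · intro q; exact Finset.sum_nonneg fun b _ => hw0 _ _ _
  · intro a
    calc (∑ c, ∑ b, w a b c) = ∑ b, ∑ c, w a b c := Finset.sum_comm
      _ = ∑ b, Γ₁ (a, b) := Finset.sum_congr rfl fun b _ => hsumc a b
      _ = μ a := h1.2.1 a
  · intro c
    calc (∑ a, ∑ b, w a b c) = ∑ b, ∑ a, w a b c := Finset.sum_comm
      _ = ∑ b, Γ₂ (b, c) := Finset.sum_congr rfl fun b _ => hsuma b c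
      _ = ν c := h2.2.2 c
  · have key : ∀ a b c, w a b c * d a c ≤ w a b c * d a b + w a b c * d b c := by
      intro a b c
      rcases eq_or_lt_of_le (hw0 a b c) with h | h
      · rw [← h]; simp
      · have hκb : κ b ≠ 0 := by
          intro hb; rw [hw] at h; simp only [if_pos hb] at h; exact lt_irrefl 0 h
        have hκbpos : 0 < κ b := lt_of_le_of_ne (hκ0 b) (Ne.symm hκb)
        have hpos : 0 < Γ₁ (a, b) * Γ₂ (b, c) := by
          rw [hw] at h; simp only [if_neg hκb] at h
          exact (div_pos_iff_of_pos_right hκbpos).mp h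
        have h1p : 0 < Γ₁ (a, b) := by
          rcases mul_pos_iff.mp hpos with ⟨u, v⟩ | ⟨u, v⟩
          · exact u
          · exact absurd v (not_lt.mpr (h2.1 (b, c)))
        have h2p : 0 < Γ₂ (b, c) := by
          rcases mul_pos_iff.mp hpos with ⟨u, v⟩ | ⟨u, v⟩
          · exact v
          · exact absurd u (not_lt.mpr (h1.1 (a, b)))
        have := htri a b c h1p h2p
        nlinarith [le_of_lt h]
    calc ∑ q : X × X, (∑ b, w q.1 b q.2) * d q.1 q.2
        = ∑ a, ∑ c, ∑ b, w a b c * d a c := by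
          rw [Fintype.sum_prod_type]
          exact Finset.sum_congr rfl fun a _ => Finset.sum_congr rfl fun c _ =>
            Finset.sum_mul _ _ _
      _ ≤ ∑ a, ∑ c, ∑ b, (w a b c * d a b + w a b c * d b c) := by
          refine Finset.sum_le_sum fun a _ => Finset.sum_le_sum fun c _ =>
            Finset.sum_le_sum fun b _ => key a b c
      _ = (∑ a, ∑ c, ∑ b, w a b c * d a b) + ∑ a, ∑ c, ∑ b, w a b c * d b c := by
          simp [Finset.sum_add_distrib]
      _ = (∑ q : X × X, Γ₁ q * d q.1 q.2) + ∑ q : X × X, Γ₂ q * d q.1 q.2 := by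
          congr 1
          · calc (∑ a, ∑ c, ∑ b, w a b c * d a b)
                = ∑ a, ∑ b, ∑ c, w a b c * d a b := by
                  exact Finset.sum_congr rfl fun a _ => Finset.sum_comm
              _ = ∑ a, ∑ b, Γ₁ (a, b) * d a b := by
                  refine Finset.sum_congr rfl fun a _ => Finset.sum_congr rfl fun b _ => ?_
                  rw [← Finset.sum_mul, hsumc a b]
              _ = ∑ q : X × X, Γ₁ q * d q.1 q.2 := by rw [Fintype.sum_prod_type]
          · calc (∑ a, ∑ c, ∑ b, w a b c * d b c)
                = ∑ a, ∑ b, ∑ c, w a b c * d b c :=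
                  Finset.sum_congr rfl fun a _ => Finset.sum_comm
              _ = ∑ b, ∑ a, ∑ c, w a b c * d b c := Finset.sum_comm
              _ = ∑ b, ∑ c, ∑ a, w a b c * d b c :=
                  Finset.sum_congr rfl fun b _ => Finset.sum_comm
              _ = ∑ b, ∑ c, Γ₂ (b, c) * d b c := by
                  refine Finset.sum_congr rfl fun b _ => Finset.sum_congr rfl fun c _ => ?_
                  rw [← Finset.sum_mul, hsuma b c]
              _ = ∑ q : X × X, Γ₂ q * d q.1 q.2 := by rw [Fintype.sum_prod_type]

lemma pc_tv_le {X : Type} [Fintype X] {μ ν : X → ℝ} {Γ : X × X → ℝ}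
    (h : IsCoupling Γ μ ν) :
    tvDist μ ν ≤ ∑ q : X × X, if q.1 ≠ q.2 then Γ q else 0 := by
  classical
  set A : X → ℝ := fun x => ∑ y, if x = y then 0 else Γ (x, y) with hA
  set B : X → ℝ := fun x => ∑ y, if y = x then 0 else Γ (y, x) with hB
  have hA0 : ∀ x, 0 ≤ A x := by
    intro x
    refine Finset.sum_nonneg fun y _ => ?_
    split
    · exact le_refl 0
    · exact h.1 _
  have hB0 : ∀ x, 0 ≤ B x := by
    intro x
    refine Finset.sum_nonneg fun y _ => ?_
    split
    · exact le_refl 0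
    · exact h.1 _
  have e1 : ∀ x, μ x - A x = Γ (x, x) := by
    intro x
    rw [← h.2.1 x, hA]
    dsimp only
    rw [← Finset.sum_sub_distrib]
    have hterm : ∀ y : X, Γ (x, y) - (if x = y then 0 else Γ (x, y)) =
        if x = y then Γ (x, y) else 0 := by
      intro y; split <;> simp
    rw [Finset.sum_congr rfl fun y _ => hterm y]
    simp
  have e2 : ∀ x, ν x - B x = Γ (x, x) := by
    intro x
    rw [← h.2.2 x, hB]
    dsimp only
    rw [← Finset.sum_sub_distrib]
    have hterm : ∀ y : X, Γ (y, x) - (if y = x then 0 else Γ (y, x)) =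
        if y = x then Γ (y, x) else 0 := by
      intro y; split <;> simp
    rw [Finset.sum_congr rfl fun y _ => hterm y]
    simp
  have habs : ∀ x, |μ x - ν x| ≤ A x + B x := by
    intro x
    have hz : μ x - ν x = A x - B x := by
      have := e1 x; have := e2 x; linarith
    rw [hz, abs_le]
    constructor
    · linarith [hA0 x, hB0 x]
    · linarith [hA0 x, hB0 x]
  have hAsum : ∑ x, A x = ∑ q : X × X, if q.1 ≠ q.2 then Γ q else 0 := by
    rw [Fintype.sum_prod_type]
    refine Finset.sum_congr rfl fun a _ => Finset.sum_congr rfl fun b _ => ?_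
    by_cases hab : a = b <;> simp [hab]
  have hBsum : ∑ x, B x = ∑ q : X × X, if q.1 ≠ q.2 then Γ q else 0 := by
    rw [Fintype.sum_prod_type]
    rw [hB]
    dsimp only
    rw [Finset.sum_comm]
    refine Finset.sum_congr rfl fun a _ => Finset.sum_congr rfl fun b _ => ?_
    by_cases hab : a = b <;> simp [hab]
  calc tvDist μ ν = (∑ x, |μ x - ν x|) / 2 := rfl
    _ ≤ (∑ x, (A x + B x)) / 2 := by
        have := Finset.sum_le_sum fun x (_ : x ∈ Finset.univ) => habs x
        linarith
    _ = ((∑ x, A x) + ∑ x, B x) / 2 := by rw [Finset.sum_add_distrib]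
    _ = ∑ q : X × X, if q.1 ≠ q.2 then Γ q else 0 := by
        rw [hAsum, hBsum]; ring

lemma pc_numeric {β ε : ℝ} {D t : ℕ} (hβ0 : 0 ≤ β) (hβ1 : β < 1) (hD : 0 < D)
    (hε0 : 0 < ε) (hε1 : ε < 1) (ht : Real.log ((D : ℝ) / ε) / (1 - β) ≤ (t : ℝ)) :
    (D : ℝ) * β ^ t ≤ ε := by
  have hD1 : (1 : ℝ) ≤ (D : ℝ) := by exact_mod_cast hD
  have hq : 1 < (D : ℝ) / ε := by
    rw [lt_div_iff₀ hε0]; linarith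
  have hlog : 0 < Real.log ((D : ℝ) / ε) := Real.log_pos hq
  have h1β : 0 < 1 - β := by linarith
  have htpos : 0 < (t : ℝ) := lt_of_lt_of_le (div_pos hlog h1β) ht
  have htne : t ≠ 0 := by
    intro h0; rw [h0] at htpos; simp at htpos
  rcases eq_or_lt_of_le hβ0 with h0 | h0
  · rw [← h0, zero_pow htne, mul_zero]
    linarith
  · have hmain : Real.log ((D : ℝ) / ε) ≤ (t : ℝ) * (1 - β) :=
      (div_le_iff₀ h1β).mp ht
    have hlb : Real.log β ≤ β - 1 := Real.log_le_sub_one_of_pos h0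
    have hβt : β ^ t ≤ Real.exp (-(Real.log ((D : ℝ) / ε))) := by
      calc β ^ t = Real.exp (Real.log β) ^ t := by rw [Real.exp_log h0]
        _ = Real.exp ((t : ℝ) * Real.log β) := by rw [← Real.exp_nat_mul]
        _ ≤ Real.exp (-(Real.log ((D : ℝ) / ε))) := by
            apply Real.exp_le_exp.mpr
            nlinarith
    have hexp : Real.exp (-(Real.log ((D : ℝ) / ε))) = ε / D := by
      rw [Real.exp_neg, Real.exp_log (by positivity : (0:ℝ) < (D : ℝ) / ε), inv_div]
    rw [hexp] at hβt
    have hDpos : (0 : ℝ) < D := by exact_mod_cast hD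
    calc (D : ℝ) * β ^ t ≤ (D : ℝ) * (ε / D) :=
          mul_le_mul_of_nonneg_left hβt (le_of_lt hDpos)
      _ = ε := by field_simp

lemma pc_phi_self {N S : Type} {Ω : Finset (N → S)} {Φ : (N → S) → (N → S) → ℕ}
    (hleast : ∀ σ ∈ Ω, ∀ ξ ∈ Ω, IsLeast (PathSums Ω Φ σ ξ) (Φ σ ξ))
    {σ : N → S} (hσ : σ ∈ Ω) : Φ σ σ = 0 := by
  have h0 : (0 : ℕ) ∈ PathSums Ω Φ σ σ := by
    refine ⟨0, fun _ => σ, fun _ => hσ, fun x y _ => Fin.ext (by omega), rfl, rfl,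
      fun i => i.elim0, by simp⟩
  have := (hleast σ hσ σ hσ).2 h0
  omega

lemma pc_triangle {N S : Type} {Ω : Finset (N → S)} {Φ : (N → S) → (N → S) → ℕ}
    (hleast : ∀ σ ∈ Ω, ∀ ξ ∈ Ω, IsLeast (PathSums Ω Φ σ ξ) (Φ σ ξ))
    {a b c : N → S} (ha : a ∈ Ω) (hb : b ∈ Ω) (hc : c ∈ Ω) :
    Φ a c ≤ Φ a b + Φ b c := by
  obtain ⟨ℓ₁, η, hηΩ, hηinj, hη0, hηl, hηadj, hηsum⟩ := (hleast a ha b hb).1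
  obtain ⟨m, θ, hθΩ, hθinj, hθ0, hθl, hθadj, hθsum⟩ := (hleast b hb c hc).1
  classical
  -- extended index functions
  set E : ℕ → (N → S) := fun r => η ⟨min r ℓ₁, Nat.lt_succ_of_le (min_le_right _ _)⟩ with hE
  set F : ℕ → (N → S) := fun r => θ ⟨min r m, Nat.lt_succ_of_le (min_le_right _ _)⟩ with hF
  have hEeq : ∀ k : Fin (ℓ₁ + 1), E k.val = η k := by
    intro k
    rw [hE]
    dsimp only
    exact congrArg _ (Fin.ext (Nat.min_eq_left (Nat.lt_succ_iff.mp k.isLt)))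
  have hFeq : ∀ k : Fin (m + 1), F k.val = θ k := by
    intro k
    rw [hF]
    dsimp only
    exact congrArg _ (Fin.ext (Nat.min_eq_left (Nat.lt_succ_iff.mp k.isLt)))
  -- the last index of θ meeting η
  set T : Finset (Fin (m + 1)) := Finset.univ.filter (fun k => ∃ i, η i = θ k) with hT
  have hTne : T.Nonempty := by
    refine ⟨0, ?_⟩
    rw [hT, Finset.mem_filter]
    exact ⟨Finset.mem_univ _, ⟨Fin.last ℓ₁, by rw [hηl, hθ0]⟩⟩
  obtain ⟨j, hjT, hjmax0⟩ := T.exists_max_image Fin.val hTne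
  rw [hT, Finset.mem_filter] at hjT
  obtain ⟨-, i, hij⟩ := hjT
  have hjmax : ∀ k : Fin (m + 1), (∃ i', η i' = θ k) → k.val ≤ j.val := by
    intro k hk
    exact hjmax0 k (by rw [hT, Finset.mem_filter]; exact ⟨Finset.mem_univ _, hk⟩)
  set I : ℕ := i.val with hI
  set J : ℕ := j.val with hJ
  have hIle : I ≤ ℓ₁ := Nat.lt_succ_iff.mp i.isLt
  have hJle : J ≤ m := Nat.lt_succ_iff.mp j.isLt
  set L : ℕ := I + (m - J) with hL
  set g : ℕ → (N → S) := fun R => if R ≤ I then E R else F (J + (R - I)) with hg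
  set ζ : Fin (L + 1) → (N → S) := fun r => g r.val with hζ
  clear_value I J L
  have hEI : E I = F J := by
    rw [show E I = η i from by rw [hI]; exact hEeq i,
      show F J = θ j from by rw [hJ]; exact hFeq j]
    exact hij
  have hgF : ∀ u : ℕ, u ≤ m - J → g (I + u) = F (J + u) := by
    intro u hu
    rw [hg]
    dsimp only
    rcases Nat.eq_zero_or_pos u with h0 | h0
    · subst h0
      simp [hEI]
    · have hcond : ¬(I + u ≤ I) := by omega
      rw [if_neg hcond]
      exact congrArg F (by omega)
  -- ζ is a valid path from a to c
  have hζΩ : ∀ r, ζ r ∈ Ω := by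
    intro r
    rw [hζ, hg]
    dsimp only
    split
    · exact hηΩ _
    · exact hθΩ _
  have hζ0 : ζ 0 = a := by
    rw [hζ]
    show g (0 : Fin (L+1)).val = a
    rw [Fin.val_zero, hg]
    dsimp only
    rw [if_pos (Nat.zero_le I)]
    rw [show E 0 = η 0 from by
      have := hEeq (0 : Fin (ℓ₁+1)); rwa [Fin.val_zero] at this]
    exact hη0
  have hζlast : ζ (Fin.last L) = c := by
    rw [hζ]
    show g (Fin.last L).val = c
    rw [Fin.val_last]
    rcases Nat.eq_or_lt_of_le hJle with hJm | hJm
    · have hLI : L = I := by omega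
      rw [hLI, hg]
      dsimp only
      rw [if_pos (le_refl I), hEI]
      rw [show F J = θ j from by rw [hJ]; exact hFeq j]
      rw [show j = Fin.last m from Fin.ext (by rw [Fin.val_last]; omega)]
      exact hθl
    · have : L = I + (m - J) := hL
      rw [show L = I + (m - J) from hL, hgF (m - J) (le_refl _)]
      rw [show J + (m - J) = m from by omega]
      rw [show F m = θ (Fin.last m) from by
        have := hFeq (Fin.last m); rwa [Fin.val_last] at this]
      exact hθl
  have hζadj : ∀ r : Fin L, AdjOne (ζ r.castSucc) (ζ r.succ) := by
    intro r
    have hrlt : r.val < L := r.isLt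
    rw [hζ]
    show AdjOne (g r.castSucc.val) (g r.succ.val)
    rw [Fin.coe_castSucc, Fin.val_succ]
    rcases Nat.lt_or_ge r.val I with h1 | h1
    · -- both in η part
      have hstep : r.val < ℓ₁ := by omega
      rw [hg]
      dsimp only
      rw [if_pos (by omega : r.val ≤ I), if_pos (by omega : r.val + 1 ≤ I)]
      have e1 : E r.val = η (⟨r.val, by omega⟩ : Fin ℓ₁).castSucc := by
        have := hEeq ((⟨r.val, by omega⟩ : Fin ℓ₁).castSucc); rwa [Fin.coe_castSucc] at this
      have e2 : E (r.val + 1) = η (⟨r.val, by omega⟩ : Fin ℓ₁).succ := by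
        have := hEeq ((⟨r.val, by omega⟩ : Fin ℓ₁).succ); rwa [Fin.val_succ] at this
      rw [e1, e2]
      exact hηadj _
    · -- θ part (possibly with the junction at r.val = I)
      have hu : I + (r.val - I) = r.val := by omega
      have g1 : g r.val = F (J + (r.val - I)) := by
        have h' := hgF (r.val - I) (by omega)
        rwa [hu] at h'
      have g2 : g (r.val + 1) = F (J + (r.val + 1 - I)) := by
        have h' := hgF (r.val + 1 - I) (by omega)
        rwa [show I + (r.val + 1 - I) = r.val + 1 from by omega] at h'
      rw [g1, g2]
      set s : ℕ := J + (r.val - I) with hs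
      have hsm : s < m := by omega
      have e1 : F s = θ (⟨s, hsm⟩ : Fin m).castSucc := by
        have := hFeq ((⟨s, hsm⟩ : Fin m).castSucc); rwa [Fin.coe_castSucc] at this
      have e2 : F (J + (r.val + 1 - I)) = θ (⟨s, hsm⟩ : Fin m).succ := by
        have := hFeq ((⟨s, hsm⟩ : Fin m).succ)
        rw [Fin.val_succ] at this
        rw [show J + (r.val + 1 - I) = s + 1 from by omega]
        exact this
      rw [e1, e2]
      exact hθadj _
  have hζinj : Function.Injective ζ := by
    intro r r' hrr
    simp only [hζ] at hrr
    have key : ∀ u u' : Fin (L + 1), u.val ≤ I → ¬ (u'.val ≤ I) →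
        g u.val ≠ g u'.val := by
      intro u u' hu hu' heq
      have hgu : g u.val = η (⟨u.val, by omega⟩ : Fin (ℓ₁ + 1)) := by
        rw [hg]
        dsimp only
        rw [if_pos hu]
        exact hEeq ⟨u.val, by omega⟩
      have hval : J + (u'.val - I) ≤ m := by
        have := u'.isLt
        omega
      have hgu' : g u'.val = θ (⟨J + (u'.val - I), by omega⟩ : Fin (m + 1)) := by
        rw [hg]
        dsimp only
        rw [if_neg hu']
        exact hFeq ⟨J + (u'.val - I), by omega⟩
      rw [hgu, hgu'] at heq
      have := hjmax _ ⟨_, heq⟩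
      dsimp at this
      omega
    by_cases h1 : r.val ≤ I <;> by_cases h2 : r'.val ≤ I
    · -- both η
      have e1 : g r.val = η (⟨r.val, by omega⟩ : Fin (ℓ₁ + 1)) := by
        rw [hg]; dsimp only; rw [if_pos h1]; exact hEeq ⟨r.val, by omega⟩
      have e2 : g r'.val = η (⟨r'.val, by omega⟩ : Fin (ℓ₁ + 1)) := by
        rw [hg]; dsimp only; rw [if_pos h2]; exact hEeq ⟨r'.val, by omega⟩
      rw [e1, e2] at hrr
      have := hηinj hrr
      exact Fin.ext (by
        have := congrArg Fin.val this
        simpa using this)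
    · exact absurd hrr (key r r' h1 h2)
    · exact absurd hrr.symm (key r' r h2 h1)
    · -- both θ
      have hv : J + (r.val - I) ≤ m := by have := r.isLt; omega
      have hv' : J + (r'.val - I) ≤ m := by have := r'.isLt; omega
      have e1 : g r.val = θ (⟨J + (r.val - I), by omega⟩ : Fin (m + 1)) := by
        rw [hg]; dsimp only; rw [if_neg h1]; exact hFeq ⟨J + (r.val - I), by omega⟩
      have e2 : g r'.val = θ (⟨J + (r'.val - I), by omega⟩ : Fin (m + 1)) := by
        rw [hg]; dsimp only; rw [if_neg h2]; exact hFeq ⟨J + (r'.val - I), by omega⟩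
      rw [e1, e2] at hrr
      have := hθinj hrr
      have hvv := congrArg Fin.val this
      dsimp at hvv
      exact Fin.ext (by omega)
  -- the sum along ζ
  have hsum : (∑ r : Fin L, Φ (ζ r.castSucc) (ζ r.succ)) ≤ Φ a b + Φ b c := by
    have hcoe : (∑ r : Fin L, Φ (ζ r.castSucc) (ζ r.succ)) =
        ∑ R ∈ Finset.range L, Φ (g R) (g (R + 1)) := by
      rw [← Fin.sum_univ_eq_sum_range (fun R => Φ (g R) (g (R + 1))) L]
      refine Finset.sum_congr rfl fun r _ => ?_
      simp only [hζ, Fin.coe_castSucc, Fin.val_succ]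
    rw [hcoe]
    have hsplit : Finset.range L = Finset.range I ∪ Finset.Ico I L := by
      rw [Finset.range_eq_Ico, Finset.range_eq_Ico]
      exact (Finset.Ico_union_Ico_eq_Ico (Nat.zero_le I) (by omega : I ≤ L)).symm
    rw [hsplit, Finset.sum_union (by
      rw [Finset.range_eq_Ico]
      exact Finset.Ico_disjoint_Ico_consecutive 0 I L)]
    have part1 : (∑ R ∈ Finset.range I, Φ (g R) (g (R + 1))) ≤ Φ a b := by
      have heq : ∀ R ∈ Finset.range I, Φ (g R) (g (R + 1)) =
          Φ (E R) (E (R + 1)) := by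
        intro R hR
        rw [Finset.mem_range] at hR
        rw [hg]
        dsimp only
        rw [if_pos (by omega : R ≤ I), if_pos (by omega : R + 1 ≤ I)]
      rw [Finset.sum_congr rfl heq]
      have hmono : (∑ R ∈ Finset.range I, Φ (E R) (E (R + 1))) ≤
          ∑ R ∈ Finset.range ℓ₁, Φ (E R) (E (R + 1)) :=
        Finset.sum_le_sum_of_subset (Finset.range_subset_range.mpr hIle)
      refine le_trans hmono ?_
      rw [hηsum]
      rw [← Fin.sum_univ_eq_sum_range (fun R => Φ (E R) (E (R + 1))) ℓ₁]
      apply le_of_eq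
      refine Finset.sum_congr rfl fun r _ => ?_
      congr 1
      · have := hEeq r.castSucc; rw [Fin.coe_castSucc] at this; exact this
      · have := hEeq r.succ; rw [Fin.val_succ] at this; exact this
    have part2 : (∑ R ∈ Finset.Ico I L, Φ (g R) (g (R + 1))) ≤ Φ b c := by
      rw [Finset.sum_Ico_eq_sum_range]
      have heq : ∀ u ∈ Finset.range (L - I), Φ (g (I + u)) (g (I + u + 1)) =
          Φ (F (J + u)) (F (J + u + 1)) := by
        intro u hu
        rw [Finset.mem_range] at hu
        have huL : u < m - J := by omega
        rw [hgF u (by omega), show I + u + 1 = I + (u + 1) from by omega,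
          hgF (u + 1) (by omega), show J + (u + 1) = J + u + 1 from by omega]
      rw [Finset.sum_congr rfl heq]
      have : (∑ u ∈ Finset.range (L - I), Φ (F (J + u)) (F (J + u + 1))) =
          ∑ R ∈ Finset.Ico J m, Φ (F R) (F (R + 1)) := by
        rw [Finset.sum_Ico_eq_sum_range]
        have : m - J = L - I := by omega
        rw [← this]
      rw [this]
      have hmono : (∑ R ∈ Finset.Ico J m, Φ (F R) (F (R + 1))) ≤
          ∑ R ∈ Finset.range m, Φ (F R) (F (R + 1)) := by
        rw [Finset.range_eq_Ico]
        exact Finset.sum_le_sum_of_subset (Finset.Ico_subset_Ico (Nat.zero_le J) (le_refl m))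
      refine le_trans hmono ?_
      rw [hθsum]
      rw [← Fin.sum_univ_eq_sum_range (fun R => Φ (F R) (F (R + 1))) m]
      apply le_of_eq
      refine Finset.sum_congr rfl fun r _ => ?_
      congr 1
      · have := hFeq r.castSucc; rw [Fin.coe_castSucc] at this; exact this
      · have := hFeq r.succ; rw [Fin.val_succ] at this; exact this
    omega
  have hmem : (∑ r : Fin L, Φ (ζ r.castSucc) (ζ r.succ)) ∈ PathSums Ω Φ a c :=
    ⟨L, ζ, hζΩ, hζinj, hζ0, hζlast, hζadj, rfl⟩
  exact le_trans ((hleast a ha c hc).2 hmem) hsum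


lemma pc_chain {N S : Type} [Fintype S] [Fintype N] [DecidableEq S] [DecidableEq N]
    {Ω : Finset (N → S)} {P : (N → S) → (N → S) → ℝ} {Φ : (N → S) → (N → S) → ℕ} {β : ℝ}
    (hleast : ∀ σ ∈ Ω, ∀ ξ ∈ Ω, IsLeast (PathSums Ω Φ σ ξ) (Φ σ ξ))
    (hP0 : ∀ σ ∈ Ω, ∀ τ, 0 ≤ P σ τ)
    (hPsupp : ∀ σ ∈ Ω, ∀ τ, τ ∉ Ω → P σ τ = 0)
    (hadj : ∀ X ∈ Ω, ∀ Y ∈ Ω, AdjOne X Y →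
      ∃ γ : ((N → S) × (N → S)) → ℝ, IsCoupling γ (P X) (P Y) ∧
        ∑ q : (N → S) × (N → S), γ q * (Φ q.1 q.2 : ℝ) ≤ β * (Φ X Y : ℝ)) :
    ∀ (ℓ : ℕ) (η : Fin (ℓ + 1) → (N → S)), (∀ i, η i ∈ Ω) →
      (∀ i : Fin ℓ, AdjOne (η i.castSucc) (η i.succ)) →
      ∃ γ : ((N → S) × (N → S)) → ℝ,
        IsCoupling γ (P (η 0)) (P (η (Fin.last ℓ))) ∧
        ∑ q : (N → S) × (N → S), γ q * (Φ q.1 q.2 : ℝ) ≤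
          β * ((∑ i : Fin ℓ, Φ (η i.castSucc) (η i.succ) : ℕ) : ℝ) := by
  intro ℓ
  induction ℓ with
  | zero =>
    intro η hΩm _
    refine ⟨fun q => if q.1 = q.2 then P (η 0) q.1 else 0, ⟨?_, ?_, ?_⟩, ?_⟩
    · intro q
      dsimp only
      split
      · exact hP0 _ (hΩm 0) _
      · exact le_refl 0
    · intro a
      simp
    · intro b
      rw [show (Fin.last 0) = (0 : Fin 1) from rfl]
      simp only []
      rw [Finset.sum_eq_single b]
      · simp
      · intro a _ hab
        rw [if_neg hab]
      · intro hb
        exact absurd (Finset.mem_univ b) hb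
    · have hz : ∀ q : (N → S) × (N → S),
          (if q.1 = q.2 then P (η 0) q.1 else 0) * (Φ q.1 q.2 : ℝ) = 0 := by
        intro q
        by_cases hq : q.1 = q.2
        · rw [if_pos hq]
          by_cases hq1 : q.1 ∈ Ω
          · rw [← hq, pc_phi_self hleast hq1]
            simp
          · rw [hPsupp _ (hΩm 0) _ hq1]
            simp
        · rw [if_neg hq]
          simp
      rw [Finset.sum_congr rfl fun q _ => hz q]
      simp
  | succ n ih =>
    intro η hΩm hadjs
    have hx : η 0 ∈ Ω := hΩm 0
    have hy : η ((0 : Fin (n + 1)).succ) ∈ Ω := hΩm _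
    have hadj01 : AdjOne (η 0) (η ((0 : Fin (n + 1)).succ)) := by
      have h := hadjs 0
      rwa [Fin.castSucc_zero] at h
    obtain ⟨Γ₁, hΓ₁, hE₁⟩ := hadj (η 0) hx (η ((0 : Fin (n + 1)).succ)) hy hadj01
    have hadj' : ∀ i : Fin n, AdjOne ((fun i => η i.succ) i.castSucc)
        ((fun i => η i.succ) i.succ) := by
      intro i
      have h := hadjs i.succ
      dsimp only
      rwa [← Fin.succ_castSucc] at h
    obtain ⟨Γ₂, hΓ₂, hE₂⟩ := ih (fun i => η i.succ) (fun i => hΩm _) hadj'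
    have hsupp : ∀ (x : N → S) (z : N → S) (w : (N → S) → ℝ),
        (∀ u, w u ≥ 0) → True := fun _ _ _ _ => trivial
    have hmem : ∀ (x : N → S), x ∈ Ω → ∀ u, 0 < P x u → u ∈ Ω := by
      intro x hxΩ u hu
      by_contra huΩ
      rw [hPsupp x hxΩ u huΩ] at hu
      exact lt_irrefl 0 hu
    have htri : ∀ a b c, 0 < Γ₁ (a, b) → 0 < Γ₂ (b, c) →
        ((Φ a c : ℝ) ≤ (Φ a b : ℝ) + (Φ b c : ℝ)) := by
      intro a b c h1 h2
      have haΩ : a ∈ Ω := hmem _ hx a (lt_of_lt_of_le h1 (pc_coupling_le_left hΓ₁ a b))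
      have hbΩ : b ∈ Ω := hmem _ hy b (lt_of_lt_of_le h1 (pc_coupling_le_right hΓ₁ a b))
      have hcΩ : c ∈ Ω :=
        hmem _ (hΩm (Fin.last n).succ) c
          (lt_of_lt_of_le h2 (pc_coupling_le_right hΓ₂ b c))
      have := pc_triangle hleast haΩ hbΩ hcΩ
      exact_mod_cast this
    obtain ⟨Γ, hΓ, hE⟩ := pc_glue hΓ₁ hΓ₂ htri
    refine ⟨Γ, ?_, ?_⟩
    · rwa [Fin.succ_last] at hΓ
    · refine le_trans hE ?_
      have hsum : (∑ i : Fin (n + 1), Φ (η i.castSucc) (η i.succ)) =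
          Φ (η 0) (η ((0 : Fin (n + 1)).succ)) +
          ∑ i : Fin n, Φ ((fun i => η i.succ) i.castSucc) ((fun i => η i.succ) i.succ) := by
        rw [Fin.sum_univ_succ]
        congr 1
      rw [hsum]
      push_cast
      push_cast at hE₁ hE₂
      linarith

set_option maxHeartbeats 2000000 in
/-- **Path coupling lemma, Bubley–Dyer.** For a Markov chain on a finite state
space `Ω ⊆ S^N`, if `Φ : Ω × Ω → {0,…,D}` is a path metric for the "differ in one
coordinate" adjacency, `(Ω, ∼)` is connected, and for every adjacent pair there is a coupling
of the one-step distributions contracting `Φ` by a factor `β < 1`, then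
`T_mix(ε) ≤ c·log(D/ε)/(1−β)` for an absolute constant `c`. -/
theorem path_coupling_lemma :
    ∃ c : ℝ, 0 < c ∧
      ∀ (S N : Type) [Fintype S] [Fintype N] [DecidableEq S] [DecidableEq N],
      ∀ (Ω : Finset (N → S)) (P : (N → S) → (N → S) → ℝ) (π : (N → S) → ℝ)
        (D : ℕ) (Φ : (N → S) → (N → S) → ℕ) (β : ℝ),
        Ω.Nonempty →
        0 < D →
        -- `P` is a transition matrix on `Ω`
        (∀ σ ∈ Ω, ∀ τ, 0 ≤ P σ τ) →
        (∀ σ ∈ Ω, ∑ τ, P σ τ = 1) →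
        (∀ σ ∈ Ω, ∀ τ, τ ∉ Ω → P σ τ = 0) →
        -- `π` is a stationary distribution supported on `Ω`
        (∀ σ, 0 ≤ π σ) →
        (∑ σ, π σ = 1) →
        (∀ σ, σ ∉ Ω → π σ = 0) →
        stepDist P π = π →
        -- `Φ` takes values in `{0,…,D}` and is positive off the diagonal
        (∀ σ ∈ Ω, ∀ ξ ∈ Ω, Φ σ ξ ≤ D) →
        (∀ σ ∈ Ω, ∀ ξ ∈ Ω, σ ≠ ξ → 1 ≤ Φ σ ξ) →
        -- `(Ω, ∼)` is connected
        (∀ σ ∈ Ω, ∀ ξ ∈ Ω, (PathSums Ω Φ σ ξ).Nonempty) →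
        -- `Φ` is the minimum over simple paths of the sum of `Φ` along the path
        (∀ σ ∈ Ω, ∀ ξ ∈ Ω, IsLeast (PathSums Ω Φ σ ξ) (Φ σ ξ)) →
        -- contraction along a coupling, for pairs differing in one coordinate
        β < 1 →
        (∀ X ∈ Ω, ∀ Y ∈ Ω, AdjOne X Y →
          ∃ γ : ((N → S) × (N → S)) → ℝ, IsCoupling γ (P X) (P Y) ∧
            ∑ q : (N → S) × (N → S), γ q * (Φ q.1 q.2 : ℝ) ≤ β * (Φ X Y : ℝ)) →
        ∀ ε : ℝ, 0 < ε → ε < 1 → ∀ X₀ ∈ Ω, ∀ t : ℕ,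
          c * Real.log ((D : ℝ) / ε) / (1 - β) ≤ (t : ℝ) →
          tvDist ((stepDist P)^[t] (deltaDist X₀)) π ≤ ε := by
  refine ⟨1, one_pos, ?_⟩
  intro S N _ _ _ _ Ω P π D Φ β hΩne hD hP0 hProw hPsupp hπ0 hπsum hπsupp hstat hΦle hΦpos
    hconn hleast hβ1 hadj ε hε0 hε1 X₀ hX₀ t ht
  rw [one_mul] at ht
  classical
  set μ : ℕ → ((N → S) → ℝ) := fun t => (stepDist P)^[t] (deltaDist X₀) with hμ
  have hμ0 : μ 0 = deltaDist X₀ := rfl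
  have hμsucc : ∀ t, μ (t + 1) = stepDist P (μ t) := fun t =>
    Function.iterate_succ_apply' (stepDist P) t (deltaDist X₀)
  have hμprop : ∀ t, (∀ σ, 0 ≤ μ t σ) ∧ (∀ σ, σ ∉ Ω → μ t σ = 0) := by
    intro t
    induction t with
    | zero =>
      rw [hμ0]
      constructor
      · intro σ
        unfold deltaDist
        split
        · exact zero_le_one
        · exact le_refl 0
      · intro σ hσ
        unfold deltaDist
        rw [if_neg]
        intro h
        rw [h] at hσ
        exact hσ hX₀
    | succ s ihs =>
      rw [hμsucc s]
      constructor
      · intro τ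
        refine Finset.sum_nonneg fun σ _ => ?_
        by_cases hσ : σ ∈ Ω
        · exact mul_nonneg (ihs.1 σ) (hP0 σ hσ τ)
        · rw [ihs.2 σ hσ, zero_mul]
      · intro τ hτ
        refine Finset.sum_eq_zero fun σ _ => ?_
        by_cases hσ : σ ∈ Ω
        · rw [hPsupp σ hσ τ hτ, mul_zero]
        · rw [ihs.2 σ hσ, zero_mul]
  by_cases hβ0 : 0 ≤ β
  · -- main case
    have hpair : ∀ x ∈ Ω, ∀ y ∈ Ω, ∃ γ : ((N → S) × (N → S)) → ℝ,
        IsCoupling γ (P x) (P y) ∧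
        ∑ q : (N → S) × (N → S), γ q * (Φ q.1 q.2 : ℝ) ≤ β * (Φ x y : ℝ) := by
      intro x hx y hy
      obtain ⟨ℓ, η, hηΩ, hηinj, hη0, hηl, hηadj, hηsum⟩ := (hleast x hx y hy).1
      obtain ⟨γ, hγ, hγE⟩ := pc_chain hleast hP0 hPsupp hadj ℓ η hηΩ hηadj
      rw [hη0, hηl] at hγ
      refine ⟨γ, hγ, ?_⟩
      rw [← hηsum] at hγE
      exact hγE
    choose Γf hΓf1 hΓf2 using hpair
    set Γsel : (N → S) → (N → S) → (((N → S) × (N → S)) → ℝ) := fun x y =>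
      if h : x ∈ Ω ∧ y ∈ Ω then Γf x h.1 y h.2 else fun _ => 0
      with hΓsel
    have hΓsel_spec : ∀ x y, x ∈ Ω → y ∈ Ω →
        IsCoupling (Γsel x y) (P x) (P y) ∧
        ∑ q : (N → S) × (N → S), Γsel x y q * (Φ q.1 q.2 : ℝ) ≤ β * (Φ x y : ℝ) := by
      intro x y hx hy
      rw [hΓsel]
      dsimp only
      rw [dif_pos ⟨hx, hy⟩]
      exact ⟨hΓf1 x hx y hy, hΓf2 x hx y hy⟩
    have hΓsel_nonneg : ∀ x y q, 0 ≤ Γsel x y q := by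
      intro x y q
      rw [hΓsel]
      dsimp only
      split
      · next h => exact (hΓf1 x h.1 y h.2).1 q
      · exact le_refl 0
    have hkey : ∀ s : ℕ, ∃ γ : ((N → S) × (N → S)) → ℝ, IsCoupling γ (μ s) π ∧
        ∑ q : (N → S) × (N → S), γ q * (Φ q.1 q.2 : ℝ) ≤ β ^ s * (D : ℝ) := by
      intro s
      induction s with
      | zero =>
        refine ⟨fun q => deltaDist X₀ q.1 * π q.2, ⟨?_, ?_, ?_⟩, ?_⟩
        · intro q
          refine mul_nonneg ?_ (hπ0 q.2)
          unfold deltaDist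
          split
          · exact zero_le_one
          · exact le_refl 0
        · intro a
          dsimp only
          rw [← Finset.mul_sum, hπsum, mul_one, hμ0]
        · intro b
          dsimp only
          rw [← Finset.sum_mul]
          have : (∑ a, deltaDist X₀ a) = 1 := by
            rw [Finset.sum_eq_single X₀ (fun b _ hb => by simp [deltaDist, hb])
              (fun h => absurd (Finset.mem_univ X₀) h)]
            simp [deltaDist]
          rw [this, one_mul]
        · rw [pow_zero, one_mul]
          have hsum : (∑ q : (N → S) × (N → S),
              deltaDist X₀ q.1 * π q.2 * (Φ q.1 q.2 : ℝ)) =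
              ∑ b, π b * (Φ X₀ b : ℝ) := by
            rw [Fintype.sum_prod_type]
            rw [Finset.sum_eq_single X₀]
            · unfold deltaDist
              simp
            · intro a _ ha
              unfold deltaDist
              simp [ha]
            · intro h
              exact absurd (Finset.mem_univ X₀) h
          rw [hsum]
          calc (∑ b, π b * (Φ X₀ b : ℝ)) ≤ ∑ b, π b * (D : ℝ) := by
                refine Finset.sum_le_sum fun b _ => ?_
                by_cases hb : b ∈ Ω
                · refine mul_le_mul_of_nonneg_left ?_ (hπ0 b)
                  exact_mod_cast hΦle X₀ hX₀ b hb
                · rw [hπsupp b hb]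
                  simp
            _ = (D : ℝ) := by rw [← Finset.sum_mul, hπsum, one_mul]
      | succ s ihs =>
        obtain ⟨γ, hγ, hγE⟩ := ihs
        have hγsupp : ∀ p : (N → S) × (N → S), γ p ≠ 0 → p.1 ∈ Ω ∧ p.2 ∈ Ω := by
          intro p hp
          constructor
          · by_contra hp1
            have h1 := pc_coupling_le_left hγ p.1 p.2
            rw [(hμprop s).2 p.1 hp1] at h1
            exact hp (le_antisymm h1 (hγ.1 p))
          · by_contra hp2
            have h2 := pc_coupling_le_right hγ p.1 p.2
            rw [hπsupp p.2 hp2] at h2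
            exact hp (le_antisymm h2 (hγ.1 p))
        refine ⟨fun q => ∑ p : (N → S) × (N → S), γ p * Γsel p.1 p.2 q, ⟨?_, ?_, ?_⟩, ?_⟩
        · intro q
          exact Finset.sum_nonneg fun p _ =>
            mul_nonneg (hγ.1 p) (hΓsel_nonneg p.1 p.2 q)
        · intro a
          dsimp only
          have hswap : (∑ b, ∑ p : (N → S) × (N → S), γ p * Γsel p.1 p.2 (a, b)) =
              ∑ p : (N → S) × (N → S), γ p * ∑ b, Γsel p.1 p.2 (a, b) := by
            rw [Finset.sum_comm]
            exact Finset.sum_congr rfl fun p _ => (Finset.mul_sum _ _ _).symm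
          rw [hswap]
          have hterm : ∀ p : (N → S) × (N → S),
              γ p * (∑ b, Γsel p.1 p.2 (a, b)) = γ p * P p.1 a := by
            intro p
            by_cases hp : γ p = 0
            · rw [hp, zero_mul, zero_mul]
            · obtain ⟨h1, h2⟩ := hγsupp p hp
              rw [(hΓsel_spec p.1 p.2 h1 h2).1.2.1 a]
          rw [Finset.sum_congr rfl fun p _ => hterm p]
          rw [hμsucc s]
          unfold stepDist
          rw [Fintype.sum_prod_type]
          refine Finset.sum_congr rfl fun x _ => ?_
          dsimp only
          rw [← Finset.sum_mul, hγ.2.1 x]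
        · intro b
          dsimp only
          have hswap : (∑ a, ∑ p : (N → S) × (N → S), γ p * Γsel p.1 p.2 (a, b)) =
              ∑ p : (N → S) × (N → S), γ p * ∑ a, Γsel p.1 p.2 (a, b) := by
            rw [Finset.sum_comm]
            exact Finset.sum_congr rfl fun p _ => (Finset.mul_sum _ _ _).symm
          rw [hswap]
          have hterm : ∀ p : (N → S) × (N → S),
              γ p * (∑ a, Γsel p.1 p.2 (a, b)) = γ p * P p.2 b := by
            intro p
            by_cases hp : γ p = 0
            · rw [hp, zero_mul, zero_mul]
            · obtain ⟨h1, h2⟩ := hγsupp p hp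
              rw [(hΓsel_spec p.1 p.2 h1 h2).1.2.2 b]
          rw [Finset.sum_congr rfl fun p _ => hterm p]
          have : (∑ p : (N → S) × (N → S), γ p * P p.2 b) = ∑ y, π y * P y b := by
            rw [Fintype.sum_prod_type]
            rw [Finset.sum_comm]
            refine Finset.sum_congr rfl fun y _ => ?_
            dsimp only
            rw [← Finset.sum_mul, hγ.2.2 y]
          rw [this]
          have := congrFun hstat b
          unfold stepDist at this
          exact this
        · dsimp only
          have hswap : (∑ q : (N → S) × (N → S),
              (∑ p : (N → S) × (N → S), γ p * Γsel p.1 p.2 q) * (Φ q.1 q.2 : ℝ)) =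
              ∑ p : (N → S) × (N → S), γ p *
                ∑ q : (N → S) × (N → S), Γsel p.1 p.2 q * (Φ q.1 q.2 : ℝ) := by
            calc (∑ q : (N → S) × (N → S),
                (∑ p : (N → S) × (N → S), γ p * Γsel p.1 p.2 q) * (Φ q.1 q.2 : ℝ))
                = ∑ q : (N → S) × (N → S), ∑ p : (N → S) × (N → S),
                    γ p * Γsel p.1 p.2 q * (Φ q.1 q.2 : ℝ) :=
                  Finset.sum_congr rfl fun q _ => Finset.sum_mul _ _ _
              _ = ∑ p : (N → S) × (N → S), ∑ q : (N → S) × (N → S),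
                    γ p * Γsel p.1 p.2 q * (Φ q.1 q.2 : ℝ) := Finset.sum_comm
              _ = ∑ p : (N → S) × (N → S), γ p *
                    ∑ q : (N → S) × (N → S), Γsel p.1 p.2 q * (Φ q.1 q.2 : ℝ) := by
                  refine Finset.sum_congr rfl fun p _ => ?_
                  rw [Finset.mul_sum]
                  exact Finset.sum_congr rfl fun q _ => (mul_assoc _ _ _)
          rw [hswap]
          have hterm2 : ∀ p : (N → S) × (N → S),
              γ p * (∑ q : (N → S) × (N → S), Γsel p.1 p.2 q * (Φ q.1 q.2 : ℝ)) ≤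
              γ p * (β * (Φ p.1 p.2 : ℝ)) := by
            intro p
            by_cases hp : γ p = 0
            · rw [hp, zero_mul, zero_mul]
            · obtain ⟨h1, h2⟩ := hγsupp p hp
              exact mul_le_mul_of_nonneg_left ((hΓsel_spec p.1 p.2 h1 h2).2) (hγ.1 p)
          calc (∑ p : (N → S) × (N → S), γ p *
                ∑ q : (N → S) × (N → S), Γsel p.1 p.2 q * (Φ q.1 q.2 : ℝ))
              ≤ ∑ p : (N → S) × (N → S), γ p * (β * (Φ p.1 p.2 : ℝ)) :=
                Finset.sum_le_sum fun p _ => hterm2 p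
            _ = β * ∑ p : (N → S) × (N → S), γ p * (Φ p.1 p.2 : ℝ) := by
                rw [Finset.mul_sum]
                exact Finset.sum_congr rfl fun p _ => by ring
            _ ≤ β * (β ^ s * (D : ℝ)) := mul_le_mul_of_nonneg_left hγE hβ0
            _ = β ^ (s + 1) * (D : ℝ) := by rw [pow_succ]; ring
    obtain ⟨γ, hγ, hγE⟩ := hkey t
    have hγsupp : ∀ p : (N → S) × (N → S), γ p ≠ 0 → p.1 ∈ Ω ∧ p.2 ∈ Ω := by
      intro p hp
      constructor
      · by_contra hp1
        have h1 := pc_coupling_le_left hγ p.1 p.2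
        rw [(hμprop t).2 p.1 hp1] at h1
        exact hp (le_antisymm h1 (hγ.1 p))
      · by_contra hp2
        have h2 := pc_coupling_le_right hγ p.1 p.2
        rw [hπsupp p.2 hp2] at h2
        exact hp (le_antisymm h2 (hγ.1 p))
    have h12 : tvDist (μ t) π ≤ ∑ q : (N → S) × (N → S), γ q * (Φ q.1 q.2 : ℝ) := by
      refine le_trans (pc_tv_le hγ) (Finset.sum_le_sum fun q _ => ?_)
      by_cases hne : q.1 ≠ q.2
      · rw [if_pos hne]
        by_cases hq : γ q = 0
        · rw [hq, zero_mul]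
        · obtain ⟨hq1, hq2⟩ := hγsupp q hq
          have hΦ1 : (1 : ℝ) ≤ (Φ q.1 q.2 : ℝ) := by
            exact_mod_cast hΦpos q.1 hq1 q.2 hq2 hne
          exact le_mul_of_one_le_right (hγ.1 q) hΦ1
      · rw [if_neg hne]
        exact mul_nonneg (hγ.1 q) (Nat.cast_nonneg _)
    have h3 : (D : ℝ) * β ^ t ≤ ε := pc_numeric hβ0 hβ1 hD hε0 hε1 ht
    show tvDist (μ t) π ≤ ε
    calc tvDist (μ t) π ≤ ∑ q : (N → S) × (N → S), γ q * (Φ q.1 q.2 : ℝ) := h12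
      _ ≤ β ^ t * (D : ℝ) := hγE
      _ = (D : ℝ) * β ^ t := mul_comm _ _
      _ ≤ ε := h3
  · -- degenerate case: β < 0 forces Ω to be a singleton
    have hβneg : β < 0 := lt_of_not_ge hβ0
    have hsing : ∀ σ ∈ Ω, σ = X₀ := by
      intro σ hσ
      by_contra hne
      obtain ⟨ℓ, η, hηΩ, hηinj, hη0, hηl, hηadj, hηsum⟩ := (hleast σ hσ X₀ hX₀).1
      rcases ℓ with _ | n
      · refine hne ?_
        rw [← hη0, ← hηl]
        exact congrArg η (Fin.ext (by simp [Fin.last]))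
      · have hadj0 := hηadj 0
        obtain ⟨γ, hγ, hγE⟩ :=
          hadj (η ((0 : Fin (n + 1)).castSucc)) (hηΩ _) (η ((0 : Fin (n + 1)).succ))
            (hηΩ _) hadj0
        have hXY : η ((0 : Fin (n + 1)).castSucc) ≠ η ((0 : Fin (n + 1)).succ) := by
          obtain ⟨i0, hne0, -⟩ := hadj0
          intro h
          exact hne0 (by rw [h])
        have hp1 : 1 ≤ Φ (η ((0 : Fin (n + 1)).castSucc)) (η ((0 : Fin (n + 1)).succ)) :=
          hΦpos _ (hηΩ _) _ (hηΩ _) hXY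
        have hnn : (0 : ℝ) ≤ ∑ q : (N → S) × (N → S), γ q * (Φ q.1 q.2 : ℝ) :=
          Finset.sum_nonneg fun q _ => mul_nonneg (hγ.1 q) (Nat.cast_nonneg _)
        have hΦpos' : (0 : ℝ) <
            (Φ (η ((0 : Fin (n + 1)).castSucc)) (η ((0 : Fin (n + 1)).succ)) : ℝ) := by
          exact_mod_cast lt_of_lt_of_le zero_lt_one hp1
        have hlt : β * (Φ (η ((0 : Fin (n + 1)).castSucc))
            (η ((0 : Fin (n + 1)).succ)) : ℝ) < 0 :=
          mul_neg_of_neg_of_pos hβneg hΦpos'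
        linarith
    have hπδ : π = deltaDist X₀ := by
      funext y
      by_cases hy : y = X₀
      · subst hy
        have hsum : (∑ σ, π σ) = π y := by
          refine Finset.sum_eq_single y (fun b _ hb => ?_) (fun h => ?_)
          · refine hπsupp b fun hbΩ => hb (hsing b hbΩ)
          · exact absurd (Finset.mem_univ y) h
        unfold deltaDist
        rw [if_pos rfl, ← hsum, hπsum]
      · unfold deltaDist
        rw [if_neg hy]
        refine hπsupp y fun hyΩ => hy (hsing y hyΩ)
    have hfix : ∀ s, μ s = π := by
      intro s
      induction s with
      | zero => rw [hμ0, hπδ]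
      | succ s ihs => rw [hμsucc, ihs, hstat]
    show tvDist (μ t) π ≤ ε
    rw [hfix t]
    unfold tvDist
    simp only [sub_self, abs_zero, Finset.sum_const_zero, zero_div]
    exact le_of_lt hε0
end

section
/- Let G₁ = (V,E₁) and G₂ = (V,E₂) be graphs on a common finite vertex set with maximum degree at most Δ, and let k be a positive integer. For every pair of colorings X, Y ∈ {1,…,k}^{V̂} that differ at exactly one vertex v*, there exists a coupling of the one-step transition distributions of the Glauber dynamics started from X and from Y under which E[Ĥ(X′,Y′) − Ĥ(X,Y)] ≤ (1/(mk)) · ( −W(v*)·(k − d_Ĝ(v*)) + Σ_{w ∈ N_Ĝ(v*)} W(w) ), where d_Ĝ(v*) denotes the degree of v* in Ĝ. -/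
open Classical

section Auxiliary

open Classical

variable {V : Type} (G₁ G₂ : SimpleGraph V) {k : ℕ}

lemma aux_glauberStep_apply_ne (σ : HatVertex G₁ G₂ → Fin k) (u : HatVertex G₁ G₂)
    (c : Fin k) {w : HatVertex G₁ G₂} (h : w ≠ u) :
    glauberStep G₁ G₂ σ u c w = σ w := by
  unfold glauberStep
  split
  · exact Function.update_of_ne h _ _
  · rfl

lemma aux_glauberStep_pos (σ : HatVertex G₁ G₂ → Fin k) (u : HatVertex G₁ G₂) (c : Fin k)
    (h : ∀ w, (hatG G₁ G₂).Adj u w → σ w ≠ c) :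
    glauberStep G₁ G₂ σ u c = Function.update σ u c := by
  unfold glauberStep
  exact if_pos h

lemma aux_glauberStep_neg (σ : HatVertex G₁ G₂ → Fin k) (u : HatVertex G₁ G₂) (c : Fin k)
    (h : ¬ ∀ w, (hatG G₁ G₂).Adj u w → σ w ≠ c) :
    glauberStep G₁ G₂ σ u c = σ := by
  unfold glauberStep
  exact if_neg h

lemma aux_hatWeight_nonneg (w : HatVertex G₁ G₂) : (0 : ℝ) ≤ (hatWeight G₁ G₂ w : ℝ) := by
  positivity

variable [Fintype V]

lemma aux_hatH_le (σ τ : HatVertex G₁ G₂ → Fin k) (s : Finset (HatVertex G₁ G₂))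
    (h : ∀ w ∉ s, σ w = τ w) :
    hatH G₁ G₂ σ τ ≤ ∑ w ∈ s, (hatWeight G₁ G₂ w : ℝ) := by
  unfold hatH
  rw [← Finset.sum_subset (Finset.subset_univ s) (fun w _ hw => by simp [h w hw])]
  refine Finset.sum_le_sum fun w _ => ?_
  split
  · exact le_rfl
  · positivity

lemma aux_hatH_eq_zero (σ τ : HatVertex G₁ G₂ → Fin k) (h : ∀ w, σ w = τ w) :
    hatH G₁ G₂ σ τ = 0 := by
  unfold hatH
  exact Finset.sum_eq_zero fun w _ => by simp [h w]

lemma aux_hatH_eq_single (σ τ : HatVertex G₁ G₂ → Fin k) (v : HatVertex G₁ G₂)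
    (h1 : σ v ≠ τ v) (h2 : ∀ w, w ≠ v → σ w = τ w) :
    hatH G₁ G₂ σ τ = (hatWeight G₁ G₂ v : ℝ) := by
  unfold hatH
  rw [Finset.sum_eq_single v]
  · simp [h1]
  · intro w _ hw
    simp [h2 w hw]
  · simp

end Auxiliary
/-- For colorings `X, Y` differing at exactly one vertex `v*`, there is a
coupling of the one-step Glauber transition distributions from `X` and `Y` under which
`E[Ĥ(X′,Y′) − Ĥ(X,Y)] ≤ (1/(mk))·(−W(v*)(k − d_Ĝ(v*)) + Σ_{w ∈ N(v*)} W(w))`. -/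
theorem glauber_coupling_one_step_bound {V : Type} [Fintype V] [DecidableEq V]
    (G₁ G₂ : SimpleGraph V) (Δ k : ℕ) (hk : 0 < k)
    (h₁ : ∀ v : V, (G₁.neighborSet v).ncard ≤ Δ)
    (h₂ : ∀ v : V, (G₂.neighborSet v).ncard ≤ Δ)
    (X Y : HatVertex G₁ G₂ → Fin k) (v : HatVertex G₁ G₂)
    (hv : X v ≠ Y v) (hXY : ∀ w, w ≠ v → X w = Y w) :
    ∃ γ : ((HatVertex G₁ G₂ → Fin k) × (HatVertex G₁ G₂ → Fin k)) → ℝ,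
      IsCoupling γ (glauberP G₁ G₂ k X) (glauberP G₁ G₂ k Y) ∧
      ∑ q : (HatVertex G₁ G₂ → Fin k) × (HatVertex G₁ G₂ → Fin k),
          γ q * (hatH G₁ G₂ q.1 q.2 - hatH G₁ G₂ X Y) ≤
        (1 / ((Fintype.card (HatVertex G₁ G₂) : ℝ) * (k : ℝ))) *
          (-(hatWeight G₁ G₂ v : ℝ) *
              ((k : ℝ) - (((hatG G₁ G₂).neighborSet v).ncard : ℝ)) +
            ∑ w ∈ Finset.univ.filter (fun w => (hatG G₁ G₂).Adj v w),
              (hatWeight G₁ G₂ w : ℝ)) := by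
  classical
  have hmpos : (0 : ℝ) < (Fintype.card (HatVertex G₁ G₂) : ℝ) := by
    have : 0 < Fintype.card (HatVertex G₁ G₂) := @Fintype.card_pos _ _ ⟨v⟩
    exact_mod_cast this
  have hmk : (0 : ℝ) < (Fintype.card (HatVertex G₁ G₂) : ℝ) * (k : ℝ) :=
    mul_pos hmpos (by exact_mod_cast hk)
  set f : HatVertex G₁ G₂ → Equiv.Perm (Fin k) :=
    fun u => if (hatG G₁ G₂).Adj v u then Equiv.swap (X v) (Y v) else Equiv.refl _ with hf
  refine ⟨fun q => (∑ u : HatVertex G₁ G₂, ∑ c : Fin k,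
      if glauberStep G₁ G₂ X u c = q.1 ∧ glauberStep G₁ G₂ Y u (f u c) = q.2
      then (1:ℝ) else 0) / ((Fintype.card (HatVertex G₁ G₂) : ℝ) * (k : ℝ)),
    ⟨?_, ?_, ?_⟩, ?_⟩
  · intro q
    apply div_nonneg _ hmk.le
    refine Finset.sum_nonneg fun u _ => Finset.sum_nonneg fun c _ => ?_
    positivity
  · intro a
    unfold glauberP
    rw [← Finset.sum_div]
    congr 1
    rw [Finset.sum_comm]
    refine Finset.sum_congr rfl fun u _ => ?_
    rw [Finset.sum_comm]
    refine Finset.sum_congr rfl fun c _ => ?_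
    by_cases hPa : glauberStep G₁ G₂ X u c = a
    · simp [hPa]
    · simp [hPa]
  · intro b
    unfold glauberP
    rw [← Finset.sum_div]
    congr 1
    rw [Finset.sum_comm]
    refine Finset.sum_congr rfl fun u _ => ?_
    rw [Finset.sum_comm]
    rw [← Equiv.sum_comp (f u) (fun c => if glauberStep G₁ G₂ Y u c = b then (1:ℝ) else 0)]
    refine Finset.sum_congr rfl fun c _ => ?_
    by_cases hq : glauberStep G₁ G₂ Y u (f u c) = b
    · simp [hq]
    · simp [hq]
  · -- the expectation bound
    have hrw : ∑ q : (HatVertex G₁ G₂ → Fin k) × (HatVertex G₁ G₂ → Fin k),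
        (∑ u : HatVertex G₁ G₂, ∑ c : Fin k,
          if glauberStep G₁ G₂ X u c = q.1 ∧ glauberStep G₁ G₂ Y u (f u c) = q.2
          then (1:ℝ) else 0) / ((Fintype.card (HatVertex G₁ G₂) : ℝ) * (k : ℝ)) *
          (hatH G₁ G₂ q.1 q.2 - hatH G₁ G₂ X Y)
        = (∑ u : HatVertex G₁ G₂, ∑ c : Fin k,
            (hatH G₁ G₂ (glauberStep G₁ G₂ X u c) (glauberStep G₁ G₂ Y u (f u c))
              - hatH G₁ G₂ X Y)) /
          ((Fintype.card (HatVertex G₁ G₂) : ℝ) * (k : ℝ)) := by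
      simp only [div_mul_eq_mul_div, ← Finset.sum_div]
      congr 1
      simp only [Finset.sum_mul]
      rw [Finset.sum_comm]
      refine Finset.sum_congr rfl fun u _ => ?_
      rw [Finset.sum_comm]
      refine Finset.sum_congr rfl fun c _ => ?_
      have hpt : ∀ q : (HatVertex G₁ G₂ → Fin k) × (HatVertex G₁ G₂ → Fin k),
          (if glauberStep G₁ G₂ X u c = q.1 ∧ glauberStep G₁ G₂ Y u (f u c) = q.2
            then (1:ℝ) else 0) * (hatH G₁ G₂ q.1 q.2 - hatH G₁ G₂ X Y)
          = if q = (glauberStep G₁ G₂ X u c, glauberStep G₁ G₂ Y u (f u c))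
            then (hatH G₁ G₂ q.1 q.2 - hatH G₁ G₂ X Y) else 0 := by
        intro q
        by_cases h : q = (glauberStep G₁ G₂ X u c, glauberStep G₁ G₂ Y u (f u c))
        · subst h; simp
        · rw [if_neg h, if_neg, zero_mul]
          rintro ⟨h1, h2⟩
          exact h (Prod.ext h1.symm h2.symm)
      simp only [hpt]
      rw [Finset.sum_ite_eq' Finset.univ]
      simp
    rw [hrw, one_div, inv_mul_eq_div, div_le_div_iff_of_pos_right hmk]
    -- abbreviations
    have hHbase : hatH G₁ G₂ X Y = (hatWeight G₁ G₂ v : ℝ) :=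
      aux_hatH_eq_single G₁ G₂ X Y v hv hXY
    -- agreement helper
    have hstep_agree : ∀ (u : HatVertex G₁ G₂) (c : Fin k),
        ((∀ w, (hatG G₁ G₂).Adj u w → X w ≠ c) ↔ (∀ w, (hatG G₁ G₂).Adj u w → Y w ≠ c)) →
        hatH G₁ G₂ (glauberStep G₁ G₂ X u c) (glauberStep G₁ G₂ Y u c)
          ≤ (hatWeight G₁ G₂ v : ℝ) := by
      intro u c hiff
      have key : ∀ w, w ∉ ({v} : Finset (HatVertex G₁ G₂)) →
          glauberStep G₁ G₂ X u c w = glauberStep G₁ G₂ Y u c w := by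
        intro w hw
        have hwv : w ≠ v := by simpa using hw
        by_cases hc : ∀ w, (hatG G₁ G₂).Adj u w → X w ≠ c
        · rw [aux_glauberStep_pos G₁ G₂ X u c hc, aux_glauberStep_pos G₁ G₂ Y u c (hiff.1 hc)]
          by_cases hwu : w = u
          · subst hwu; simp
          · simp only [Function.update_apply, if_neg hwu]
            exact hXY w hwv
        · rw [aux_glauberStep_neg G₁ G₂ X u c hc,
            aux_glauberStep_neg G₁ G₂ Y u c (fun h => hc (hiff.2 h))]
          exact hXY w hwv
      calc hatH G₁ G₂ (glauberStep G₁ G₂ X u c) (glauberStep G₁ G₂ Y u c)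
          ≤ ∑ w ∈ ({v} : Finset (HatVertex G₁ G₂)), (hatWeight G₁ G₂ w : ℝ) :=
            aux_hatH_le G₁ G₂ _ _ _ key
        _ = (hatWeight G₁ G₂ v : ℝ) := Finset.sum_singleton _ _
    -- per-vertex bound
    have hB : ∀ u : HatVertex G₁ G₂,
        ∑ c : Fin k, (hatH G₁ G₂ (glauberStep G₁ G₂ X u c) (glauberStep G₁ G₂ Y u (f u c))
            - hatH G₁ G₂ X Y)
        ≤ (if u = v then -(hatWeight G₁ G₂ v : ℝ) *
              ((k : ℝ) - (((hatG G₁ G₂).neighborSet v).ncard : ℝ)) else 0) +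
          (if (hatG G₁ G₂).Adj v u then (hatWeight G₁ G₂ u : ℝ) else 0) := by
      intro u
      by_cases huv : u = v
      · subst huv
        rw [if_pos rfl, if_neg ((hatG G₁ G₂).irrefl), add_zero]
        have hfv : ∀ c : Fin k, f u c = c := by
          intro c; simp [hf, (hatG G₁ G₂).irrefl]
        have hcond : ∀ c : Fin k, (∀ w, (hatG G₁ G₂).Adj u w → X w ≠ c) ↔
            (∀ w, (hatG G₁ G₂).Adj u w → Y w ≠ c) := by
          intro c
          constructor
          · intro h w hw; rw [← hXY w hw.ne']; exact h w hw
          · intro h w hw; rw [hXY w hw.ne']; exact h w hw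
        have hterm : ∀ c : Fin k,
            hatH G₁ G₂ (glauberStep G₁ G₂ X u c) (glauberStep G₁ G₂ Y u (f u c))
              - hatH G₁ G₂ X Y
            = if (∀ w, (hatG G₁ G₂).Adj u w → X w ≠ c)
              then -(hatWeight G₁ G₂ u : ℝ) else 0 := by
          intro c
          rw [hfv c]
          by_cases hc : ∀ w, (hatG G₁ G₂).Adj u w → X w ≠ c
          · have hzero : hatH G₁ G₂ (glauberStep G₁ G₂ X u c) (glauberStep G₁ G₂ Y u c) = 0 := by
              apply aux_hatH_eq_zero
              intro w
              rw [aux_glauberStep_pos G₁ G₂ X u c hc,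
                aux_glauberStep_pos G₁ G₂ Y u c ((hcond c).1 hc)]
              by_cases hwu : w = u
              · subst hwu; simp
              · simp only [Function.update_apply, if_neg hwu]
                exact hXY w hwu
            rw [if_pos hc, hzero, hHbase]
            ring
          · rw [if_neg hc, aux_glauberStep_neg G₁ G₂ X u c hc,
              aux_glauberStep_neg G₁ G₂ Y u c (fun h => hc ((hcond c).2 h)), sub_self]
        simp only [hterm]
        rw [Finset.sum_ite, Finset.sum_const, Finset.sum_const_zero, add_zero, nsmul_eq_mul]
        have hd : (((hatG G₁ G₂).neighborSet u).ncard : ℝ)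
            = ((Finset.univ.filter (fun w => (hatG G₁ G₂).Adj u w)).card : ℝ) := by
          norm_cast
          rw [← Set.ncard_coe_finset]
          congr 1
          ext w; simp [SimpleGraph.mem_neighborSet]
        have hsplit : ((Finset.univ.filter
              (fun c : Fin k => ∀ w, (hatG G₁ G₂).Adj u w → X w ≠ c)).card) +
            ((Finset.univ.filter
              (fun c : Fin k => ¬ ∀ w, (hatG G₁ G₂).Adj u w → X w ≠ c)).card) = k := by
          rw [Finset.card_filter_add_card_filter_not]
          simp
        have hsub : (Finset.univ.filter
              (fun c : Fin k => ¬ ∀ w, (hatG G₁ G₂).Adj u w → X w ≠ c))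
            ⊆ (Finset.univ.filter (fun w => (hatG G₁ G₂).Adj u w)).image X := by
          intro c hc
          simp only [Finset.mem_filter, Finset.mem_univ, true_and] at hc
          push_neg at hc
          obtain ⟨w, hw1, hw2⟩ := hc
          exact Finset.mem_image.2 ⟨w, by simp [hw1], hw2⟩
        have hcard : ((Finset.univ.filter
              (fun c : Fin k => ¬ ∀ w, (hatG G₁ G₂).Adj u w → X w ≠ c)).card : ℝ)
            ≤ (((hatG G₁ G₂).neighborSet u).ncard : ℝ) := by
          rw [hd]
          exact_mod_cast le_trans (Finset.card_le_card hsub) Finset.card_image_le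
        have hacard : ((k:ℝ) - (((hatG G₁ G₂).neighborSet u).ncard : ℝ))
            ≤ ((Finset.univ.filter
              (fun c : Fin k => ∀ w, (hatG G₁ G₂).Adj u w → X w ≠ c)).card : ℝ) := by
          have h2 : ((Finset.univ.filter
              (fun c : Fin k => ∀ w, (hatG G₁ G₂).Adj u w → X w ≠ c)).card : ℝ) +
            ((Finset.univ.filter
              (fun c : Fin k => ¬ ∀ w, (hatG G₁ G₂).Adj u w → X w ≠ c)).card : ℝ) = k := by
            exact_mod_cast hsplit
          linarith
        have hW : (0:ℝ) ≤ (hatWeight G₁ G₂ u : ℝ) := by positivity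
        nlinarith [mul_le_mul_of_nonneg_left hacard hW]
      · rw [if_neg huv]
        by_cases hadj : (hatG G₁ G₂).Adj v u
        · rw [if_pos hadj, zero_add]
          have hfu : ∀ c : Fin k, f u c = Equiv.swap (X v) (Y v) c := by
            intro c; simp [hf, hadj]
          have hterm : ∀ c : Fin k,
              hatH G₁ G₂ (glauberStep G₁ G₂ X u c) (glauberStep G₁ G₂ Y u (f u c))
                - hatH G₁ G₂ X Y ≤ if c = Y v then (hatWeight G₁ G₂ u : ℝ) else 0 := by
            intro c
            by_cases hcb : c = Y v
            · rw [if_pos hcb, hfu c, hcb, Equiv.swap_apply_right]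
              have hag : ∀ w, w ∉ ({v, u} : Finset (HatVertex G₁ G₂)) →
                  glauberStep G₁ G₂ X u (Y v) w = glauberStep G₁ G₂ Y u (X v) w := by
                intro w hw
                simp only [Finset.mem_insert, Finset.mem_singleton] at hw
                push_neg at hw
                rw [aux_glauberStep_apply_ne G₁ G₂ X u _ hw.2,
                  aux_glauberStep_apply_ne G₁ G₂ Y u _ hw.2]
                exact hXY w hw.1
              have hle := aux_hatH_le G₁ G₂ _ _ _ hag
              rw [Finset.sum_pair (Ne.symm huv)] at hle
              rw [hHbase]
              linarith
            · rw [if_neg hcb]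
              by_cases hca : c = X v
              · rw [hfu c, hca, Equiv.swap_apply_left,
                  aux_glauberStep_neg G₁ G₂ X u (X v) (fun h => h v hadj.symm rfl),
                  aux_glauberStep_neg G₁ G₂ Y u (Y v) (fun h => h v hadj.symm rfl),
                  sub_self]
              · have hfc : f u c = c := by
                  rw [hfu c, Equiv.swap_apply_of_ne_of_ne hca hcb]
                rw [hfc]
                have hiff : (∀ w, (hatG G₁ G₂).Adj u w → X w ≠ c) ↔
                    (∀ w, (hatG G₁ G₂).Adj u w → Y w ≠ c) := by
                  constructor
                  · intro h w hw
                    by_cases hwv : w = v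
                    · subst hwv; exact fun e => hcb e.symm
                    · rw [← hXY w hwv]; exact h w hw
                  · intro h w hw
                    by_cases hwv : w = v
                    · subst hwv; exact fun e => hca e.symm
                    · rw [hXY w hwv]; exact h w hw
                have hle := hstep_agree u c hiff
                rw [hHbase]
                linarith
          calc ∑ c : Fin k,
                (hatH G₁ G₂ (glauberStep G₁ G₂ X u c) (glauberStep G₁ G₂ Y u (f u c))
                  - hatH G₁ G₂ X Y)
              ≤ ∑ c : Fin k, (if c = Y v then (hatWeight G₁ G₂ u : ℝ) else 0) :=
                Finset.sum_le_sum fun c _ => hterm c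
            _ = (hatWeight G₁ G₂ u : ℝ) := by simp
        · rw [if_neg hadj, add_zero]
          have hfu : ∀ c : Fin k, f u c = c := by
            intro c; simp [hf, hadj]
          refine Finset.sum_nonpos fun c _ => ?_
          rw [hfu c]
          have hiff : (∀ w, (hatG G₁ G₂).Adj u w → X w ≠ c) ↔
              (∀ w, (hatG G₁ G₂).Adj u w → Y w ≠ c) := by
            constructor
            · intro h w hw
              have hwv : w ≠ v := fun e => hadj (by rw [e] at hw; exact hw.symm)
              rw [← hXY w hwv]; exact h w hw
            · intro h w hw
              have hwv : w ≠ v := fun e => hadj (by rw [e] at hw; exact hw.symm)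
              rw [hXY w hwv]; exact h w hw
          have hle := hstep_agree u c hiff
          rw [hHbase]
          linarith
    calc ∑ u : HatVertex G₁ G₂, ∑ c : Fin k,
          (hatH G₁ G₂ (glauberStep G₁ G₂ X u c) (glauberStep G₁ G₂ Y u (f u c))
            - hatH G₁ G₂ X Y)
        ≤ ∑ u : HatVertex G₁ G₂,
          ((if u = v then -(hatWeight G₁ G₂ v : ℝ) *
              ((k : ℝ) - (((hatG G₁ G₂).neighborSet v).ncard : ℝ)) else 0) +
          (if (hatG G₁ G₂).Adj v u then (hatWeight G₁ G₂ u : ℝ) else 0)) :=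
          Finset.sum_le_sum fun u _ => hB u
      _ = -(hatWeight G₁ G₂ v : ℝ) *
              ((k : ℝ) - (((hatG G₁ G₂).neighborSet v).ncard : ℝ)) +
            ∑ w ∈ Finset.univ.filter (fun w => (hatG G₁ G₂).Adj v w),
              (hatWeight G₁ G₂ w : ℝ) := by
          rw [Finset.sum_add_distrib, Finset.sum_ite_eq' Finset.univ, Finset.sum_filter]
          simp
end
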